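/- arXiv:2207.11765 — 2 statements merged into one kernel-verified Lean document; each statement's English description precedes it below -/
import Mathlib

section
/- For any context-free grammar G and any nonterminal X, a terminal a belongs to First(X) (the least fixed point of the First equations) if and only if there exists a derivation X ⇒* aβ for some string β ∈ (V ∪ Σ)*. -/
open Classical

universe uT uN
variable {T : Type uT}

/-- The context-free grammar of the older Mathlib, with nonterminals in an arbitrary universe. -/
structure ContextFreeGrammarU.{uN', uT'} (T : Type uT') where
  /-- Type of nonterminals. -/
  NT : Type uN'
  /-- Initial nonterminal. -/
  initial : NT
  /-- Rewrite rules. -/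
  rules : Finset (ContextFreeRule T NT)

/-- One step of a context-free transformation by a rule of `g`. -/
def ContextFreeGrammarU.Produces (g : ContextFreeGrammarU.{uN} T) (u v : List (Symbol T g.NT)) :
    Prop :=
  ∃ r ∈ g.rules, r.Rewrites u v

/-- `g` can transform `u` to `v` in some number of rewriting steps. -/
abbrev ContextFreeGrammarU.Derives (g : ContextFreeGrammarU.{uN} T) :
    List (Symbol T g.NT) → List (Symbol T g.NT) → Prop :=
  Relation.ReflTransGen g.Produces

/-- `First` of a sentential form, relative to a candidate assignment `f` of
`First` sets (subsets of Σ ∪ {ε}, encoded as `Set (Option T)` with `none` for ε)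
to nonterminals. -/
noncomputable def firstStr {N : Type uN} (f : N → Set (Option T)) :
    List (Symbol T N) → Set (Option T)
  | [] => {none}
  | Symbol.terminal a :: _ => {some a}
  | Symbol.nonterminal X :: rest =>
      (f X \ {none}) ∪ (if none ∈ f X then firstStr f rest else ∅)

/-- The one-step operator for the standard `First`-set fixed-point equations. -/
noncomputable def firstOp (g : ContextFreeGrammarU.{uN} T) :
    (g.NT → Set (Option T)) → (g.NT → Set (Option T)) :=
  fun f X => ⋃ r ∈ {r : ContextFreeRule T g.NT | r ∈ g.rules ∧ r.input = X},
    firstStr f r.output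

/-- The `First` sets, as the least fixed point (Knaster–Tarski) of `firstOp`. -/
noncomputable def firstLfp (g : ContextFreeGrammarU.{uN} T) : g.NT → Set (Option T) :=
  sInf {f : g.NT → Set (Option T) | firstOp g f ≤ f}

lemma ContextFreeGrammarU.Derives.refl {g : ContextFreeGrammarU.{uN} T}
    (u : List (Symbol T g.NT)) : g.Derives u u :=
  Relation.ReflTransGen.refl

lemma ContextFreeGrammarU.Produces.single {g : ContextFreeGrammarU.{uN} T}
    {u v : List (Symbol T g.NT)} (h : g.Produces u v) : g.Derives u v :=
  Relation.ReflTransGen.single h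

lemma ContextFreeGrammarU.Derives.trans {g : ContextFreeGrammarU.{uN} T}
    {u v w : List (Symbol T g.NT)} (h1 : g.Derives u v) (h2 : g.Derives v w) :
    g.Derives u w :=
  Relation.ReflTransGen.trans h1 h2

lemma ContextFreeGrammarU.Derives.append_right {g : ContextFreeGrammarU.{uN} T}
    {u v : List (Symbol T g.NT)} (h : g.Derives u v) (p : List (Symbol T g.NT)) :
    g.Derives (u ++ p) (v ++ p) := by
  induction h with
  | refl => exact Relation.ReflTransGen.refl
  | tail _ hs ih =>
    obtain ⟨r, hr, hrw⟩ := hs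
    exact Relation.ReflTransGen.tail ih ⟨r, hr, hrw.append_right p⟩

/-- Combination of two first sets. -/
noncomputable def fcomb (s t : Set (Option T)) : Set (Option T) :=
  (s \ {none}) ∪ (if none ∈ s then t else ∅)

lemma fcomb_mono {s s' t t' : Set (Option T)} (hs : s ⊆ s') (ht : t ⊆ t') :
    fcomb s t ⊆ fcomb s' t' := by
  unfold fcomb
  intro x hx
  rcases hx with hx | hx
  · exact Or.inl ⟨hs hx.1, hx.2⟩
  · split at hx
    · rename_i h
      simp only [if_pos (hs h)]
      exact Or.inr (ht hx)
    · exact absurd hx (Set.notMem_empty x)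

lemma fcomb_assoc (s t u : Set (Option T)) :
    fcomb (fcomb s t) u = fcomb s (fcomb t u) := by
  unfold fcomb
  by_cases hs : none ∈ s <;> by_cases ht : none ∈ t <;>
    ext o <;> simp [hs, ht] <;> tauto

lemma firstStr_append {N : Type uN} (f : N → Set (Option T)) (x y : List (Symbol T N)) :
    firstStr f (x ++ y) = fcomb (firstStr f x) (firstStr f y) := by
  induction x with
  | nil =>
    simp [firstStr, fcomb]
  | cons s rest ih =>
    cases s with
    | terminal a =>
      simp only [List.cons_append, firstStr, fcomb]
      ext o
      simp [Option.some_ne_none]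
    | nonterminal X =>
      show fcomb (f X) (firstStr f (rest ++ y))
        = fcomb (fcomb (f X) (firstStr f rest)) (firstStr f y)
      rw [ih, fcomb_assoc]

lemma firstStr_nt {N : Type uN} (f : N → Set (Option T)) (X : N) :
    firstStr f [Symbol.nonterminal X] = f X := by
  simp only [firstStr]
  by_cases h : none ∈ f X <;> ext o <;> simp [h, firstStr] <;>
    rintro rfl <;> tauto

lemma firstStr_mono {N : Type uN} {f f' : N → Set (Option T)} (hf : f ≤ f')
    (l : List (Symbol T N)) : firstStr f l ⊆ firstStr f' l := by
  induction l with
  | nil => exact le_rfl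
  | cons s rest ih =>
    cases s with
    | terminal a => exact le_rfl
    | nonterminal X =>
      simp only [firstStr]
      apply Set.union_subset_union
      · exact Set.diff_subset_diff_left (hf X)
      · split
        · rename_i h
          rw [if_pos (hf X h)]
          exact ih
        · exact Set.empty_subset _

lemma firstOp_mono (g : ContextFreeGrammarU.{uN} T) {f f' : g.NT → Set (Option T)}
    (hf : f ≤ f') : firstOp g f ≤ firstOp g f' := by
  intro X
  exact Set.iUnion₂_mono fun r _ => firstStr_mono hf r.output

lemma firstLfp_prefixed (g : ContextFreeGrammarU.{uN} T) :
    firstOp g (firstLfp g) ≤ firstLfp g := by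
  apply le_sInf
  intro f hf
  exact le_trans (firstOp_mono g (sInf_le hf)) hf

/-- One derivation step can only shrink the first set. -/
lemma firstStr_anti_produces (g : ContextFreeGrammarU.{uN} T) {f : g.NT → Set (Option T)}
    (hf : firstOp g f ≤ f) {u v : List (Symbol T g.NT)} (huv : g.Produces u v) :
    firstStr f v ⊆ firstStr f u := by
  obtain ⟨r, hrmem, hr⟩ := huv
  obtain ⟨p, q, rfl, rfl⟩ := hr.exists_parts
  have hout : firstStr f r.output ⊆ f r.input := by
    refine le_trans ?_ (hf r.input)
    intro x hx
    exact Set.mem_biUnion ⟨hrmem, rfl⟩ hx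
  calc firstStr f (p ++ r.output ++ q)
      = fcomb (firstStr f p) (fcomb (firstStr f r.output) (firstStr f q)) := by
        rw [List.append_assoc, firstStr_append, firstStr_append]
    _ ⊆ fcomb (firstStr f p) (fcomb (f r.input) (firstStr f q)) :=
        fcomb_mono le_rfl (fcomb_mono hout le_rfl)
    _ = firstStr f (p ++ [Symbol.nonterminal r.input] ++ q) := by
        rw [List.append_assoc, firstStr_append, firstStr_append, firstStr_nt]

lemma firstStr_anti_derives (g : ContextFreeGrammarU.{uN} T) {f : g.NT → Set (Option T)}
    (hf : firstOp g f ≤ f) {u v : List (Symbol T g.NT)} (huv : g.Derives u v) :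
    firstStr f v ⊆ firstStr f u := by
  induction huv with
  | refl => exact le_rfl
  | tail _ last ih => exact le_trans (firstStr_anti_produces g hf last) ih

/-- The semantic candidate assignment. -/
noncomputable def semFirst (g : ContextFreeGrammarU.{uN} T) : g.NT → Set (Option T) :=
  fun X => {o | match o with
    | none => g.Derives [Symbol.nonterminal X] []
    | some a => ∃ β, g.Derives [Symbol.nonterminal X] (Symbol.terminal a :: β)}

lemma semFirst_sound (g : ContextFreeGrammarU.{uN} T) (γ : List (Symbol T g.NT)) :
    ∀ o ∈ firstStr (semFirst g) γ,
      match o with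
      | none => g.Derives γ []
      | some a => ∃ β, g.Derives γ (Symbol.terminal a :: β) := by
  induction γ with
  | nil =>
    intro o ho
    simp only [firstStr, Set.mem_singleton_iff] at ho
    subst ho
    exact ContextFreeGrammarU.Derives.refl []
  | cons s rest ih =>
    cases s with
    | terminal b =>
      intro o ho
      simp only [firstStr, Set.mem_singleton_iff] at ho
      subst ho
      exact ⟨rest, ContextFreeGrammarU.Derives.refl _⟩
    | nonterminal Y =>
      intro o ho
      simp only [firstStr, Set.mem_union, Set.mem_diff, Set.mem_singleton_iff] at ho
      rcases ho with ⟨hY, hne⟩ | ho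
      · -- o ∈ semFirst g Y, o ≠ none
        match o, hne with
        | some a, _ =>
          obtain ⟨β, hβ⟩ := hY
          refine ⟨β ++ rest, ?_⟩
          have := hβ.append_right rest
          simpa using this
      · split at ho
        · rename_i hYe
          have hYnil : g.Derives [Symbol.nonterminal Y] [] := hYe
          have hstep : g.Derives (Symbol.nonterminal Y :: rest) rest := by
            have := hYnil.append_right rest
            simpa using this
          have := ih o ho
          match o, this with
          | none, h => exact hstep.trans h
          | some a, ⟨β, hβ⟩ => exact ⟨β, hstep.trans hβ⟩
        · exact absurd ho (Set.notMem_empty o)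

lemma semFirst_prefixed (g : ContextFreeGrammarU.{uN} T) :
    firstOp g (semFirst g) ≤ semFirst g := by
  intro X o ho
  simp only [firstOp, Set.mem_iUnion, Set.mem_setOf_eq] at ho
  obtain ⟨r, ⟨hrmem, hrX⟩, ho⟩ := ho
  have hstep : g.Derives [Symbol.nonterminal X] r.output := by
    refine (ContextFreeGrammarU.Produces.single ⟨r, hrmem, ?_⟩)
    rw [← hrX]
    exact ContextFreeRule.Rewrites.input_output
  have := semFirst_sound g r.output o ho
  match o, this with
  | none, h => exact hstep.trans h
  | some a, ⟨β, hβ⟩ => exact ⟨β, hstep.trans hβ⟩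

/-- A terminal `a` belongs to `First(X)` iff `X ⇒* a β` for some sentential form β. -/
theorem mem_firstLfp_iff_derives (g : ContextFreeGrammarU.{uN} T) (X : g.NT) (a : T) :
    some a ∈ firstLfp g X ↔
      ∃ β : List (Symbol T g.NT),
        g.Derives [Symbol.nonterminal X] (Symbol.terminal a :: β) := by
  constructor
  · intro h
    have hle : firstLfp g ≤ semFirst g := sInf_le (semFirst_prefixed g)
    exact semFirst_sound g [Symbol.nonterminal X] (some a) (by rw [firstStr_nt]; exact hle X h)
  · rintro ⟨β, hβ⟩
    have := firstStr_anti_derives g (firstLfp_prefixed g) hβ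
    have h2 : some a ∈ firstStr (firstLfp g) (Symbol.terminal a :: β) := by
      simp [firstStr]
    have h3 := this h2
    rw [firstStr_nt] at h3
    exact h3
end

section
/- In the candidate enumeration transition system, every accepted generated token sequence T_gen has reliable subsequence exactly equal to T_rel: if ⟨A₀, [], T_rel⟩ →* ⟨a:A, T_gen, []⟩ → accept using the rules T-Unreliable-Terminal, T-Reliable-Terminal, T-Non-Terminal, then the subsequence of T_gen consisting of reliable tokens (tokens not in U) equals T_rel. -/
open Classical

universe uT uN
variable {T : Type uT}

/-- Context-free grammar with the universe-polymorphic type of nonterminals, as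
`ContextFreeGrammar` was defined in Mathlib of December 2024. -/
structure ContextFreeGrammarPoly.{u, v} (T : Type v) where
  /-- Type of nonterminals. -/
  NT : Type u
  /-- Initial nonterminal. -/
  initial : NT
  /-- Rewrite rules. -/
  rules : Finset (ContextFreeRule T NT)

/-- States of the candidate-enumeration transition system: a parsing stack `A`
over `V ∪ Σ`, the generated tokens `T_gen`, and the remaining required reliable
tokens `T_rel`. -/
abbrev EnumState (g : ContextFreeGrammarPoly.{uN} T) :=
  List (Symbol T g.NT) × List T × List T

/-- Transition rules of the candidate enumerator:
* `T-Unreliable-Terminal`: pop an unreliable terminal from the stack and append it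
  to `T_gen`;
* `T-Reliable-Terminal`: pop a reliable terminal matching the head of `T_rel`,
  appending it to `T_gen`;
* `T-Non-Terminal`: replace a nonterminal on top of the stack by the right-hand
  side of one of its productions. -/
inductive EnumStep (g : ContextFreeGrammarPoly.{uN} T) (U : Set T) :
    EnumState g → EnumState g → Prop
  | unreliable {A : List (Symbol T g.NT)} {Tg Tr : List T} {a : T} (ha : a ∈ U) :
      EnumStep g U (Symbol.terminal a :: A, Tg, Tr) (A, Tg ++ [a], Tr)
  | reliable {A : List (Symbol T g.NT)} {Tg Tr : List T} {a : T} (ha : a ∉ U) :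
      EnumStep g U (Symbol.terminal a :: A, Tg, a :: Tr) (A, Tg ++ [a], Tr)
  | expand {A : List (Symbol T g.NT)} {Tg Tr : List T}
      (r : ContextFreeRule T g.NT) (hr : r ∈ g.rules) :
      EnumStep g U (Symbol.nonterminal r.input :: A, Tg, Tr) (r.output ++ A, Tg, Tr)

theorem enum_invariant {g : ContextFreeGrammarPoly.{uN} T} {U : Set T} {s s' : EnumState g}
    (h : Relation.ReflTransGen (EnumStep g U) s s') :
    s.2.1.filter (fun a => decide (a ∉ U)) ++ s.2.2
      = s'.2.1.filter (fun a => decide (a ∉ U)) ++ s'.2.2 := by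
  induction h with
  | refl => rfl
  | tail _ hstep ih =>
    refine ih.trans ?_
    cases hstep with
    | unreliable ha => simp [List.filter_append, ha]
    | reliable ha => simp [List.filter_append, ha]
    | expand r hr => rfl

/-- Every accepted generated token sequence has reliable subsequence exactly
`T_rel`: if from `⟨A₀, [], T_rel⟩` the enumerator reaches a state `⟨A, T_gen, []⟩`
(where `T-Accept` fires), then the subsequence of `T_gen` consisting of the tokens
not in `U` equals `T_rel`. -/
theorem enum_reliable_subseq (g : ContextFreeGrammarPoly.{uN} T) (U : Set T)
    (A₀ A : List (Symbol T g.NT)) (Trel Tgen : List T)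
    (h : Relation.ReflTransGen (EnumStep g U) (A₀, [], Trel) (A, Tgen, [])) :
    Tgen.filter (fun a => decide (a ∉ U)) = Trel := by
  have := enum_invariant h
  simpa using this.symm
end
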